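/- arXiv:2601.15880 — 4 statements merged into one kernel-verified Lean document; each statement's English description precedes it below -/
import Mathlib

section
/- Let (Ω,𝒜,P) be a probability space and p ≥ 1. For each m let C_m : Ω × ℝᵖ → ℝ be jointly measurable, twice continuously differentiable in the second argument for every ω, with gradient U_m(ω,β) = ∇_β C_m(ω,β) and Jacobian DU_m(ω,β) of U_m. Assume: (a) there is a twice continuously differentiable function f : ℝᵖ → ℝ such that for every β ∈ ℝᵖ, C_m(β) → f(β) in probability; (b) for every β ∈ ℝᵖ, U_m(β) → ∇f(β) in probability, and ∇f has a unique root β₀ ∈ ℝᵖ; (c) there is an open ball B centered at β₀ and a map Σ̌ from an open set containing B to the symmetric p×p real matrices, continuous at β₀, with Σ̌(β₀) positive definite, such that sup_{β∈B} ‖DU_m(β) + Σ̌(β)‖ → 0 in probability. Then P({ω : there exists β ∈ B with U_m(ω,β) = 0}) → 1, i.e., a root of the estimating equation U_m(β) = 0 exists with probability tending to one. -/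
open MeasureTheory ProbabilityTheory Filter Matrix Topology
open scoped NNReal ENNReal

/-- **Theorem 1 (i)**: a root of the pseudo-observation generalized estimating equation
`U_m(β) = 0` exists in the ball `B` with probability tending to one. -/
theorem existence_of_GEE_root
    {Ω : Type*} [MeasurableSpace Ω] (P : Measure Ω) [IsProbabilityMeasure P]
    (p : ℕ) (hp : 1 ≤ p)
    -- the objective functions C_m, jointly measurable and C² in β
    (C : ℕ → Ω → (Fin p → ℝ) → ℝ)
    (hCmeas : ∀ m, Measurable fun x : Ω × (Fin p → ℝ) => C m x.1 x.2)
    (hCsmooth : ∀ m ω, ContDiff ℝ 2 (C m ω))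
    -- U_m = ∇C_m is the gradient of C_m, with Jacobian DU_m
    (U : ℕ → Ω → (Fin p → ℝ) → (Fin p → ℝ))
    (hgrad : ∀ m ω β i, U m ω β i = fderiv ℝ (C m ω) β (Pi.single i 1))
    (DU : ℕ → Ω → (Fin p → ℝ) → ((Fin p → ℝ) →L[ℝ] (Fin p → ℝ)))
    (hDU : ∀ m ω β, HasFDerivAt (U m ω) (DU m ω β) β)
    -- (a) C_m(β) → f(β) in probability, f twice continuously differentiable
    (f : (Fin p → ℝ) → ℝ) (hf : ContDiff ℝ 2 f)
    (hCconv : ∀ β, TendstoInMeasure P (fun m ω => C m ω β) atTop fun _ => f β)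
    -- (b) U_m(β) → ∇f(β) in probability, and ∇f has the unique root β₀
    (hUconv : ∀ β, TendstoInMeasure P (fun m ω => U m ω β) atTop
      fun _ => fun i => fderiv ℝ f β (Pi.single i 1))
    (β₀ : Fin p → ℝ)
    (hβ₀root : fderiv ℝ f β₀ = 0)
    (hβ₀uniq : ∀ β, fderiv ℝ f β = 0 → β = β₀)
    -- (c) uniform convergence of the Jacobians to -Σ̌ on a ball B around β₀
    (r : ℝ) (hr : 0 < r)
    (Sigc : (Fin p → ℝ) → Matrix (Fin p) (Fin p) ℝ)
    (hSigSymm : ∀ β, (Sigc β).IsSymm)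
    (hSigCont : ContinuousAt Sigc β₀)
    (hSigPos : (Sigc β₀).PosDef)
    (hUnif : ∀ ε > (0 : ℝ), Tendsto
      (fun m => P {ω | ∃ β ∈ Metric.ball β₀ r,
        ε ≤ ‖DU m ω β + LinearMap.toContinuousLinearMap (Sigc β).mulVecLin‖})
      atTop (𝓝 0)) :
    -- (i) existence of a root with probability tending to one
    Tendsto (fun m => P {ω | ∃ β ∈ Metric.ball β₀ r, U m ω β = 0}) atTop (𝓝 1) := by
  haveI : Nonempty (Fin p) := ⟨⟨0, hp⟩⟩
  -- notation for the limiting continuous linear maps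
  let M : (Fin p → ℝ) → ((Fin p → ℝ) →L[ℝ] (Fin p → ℝ)) :=
    fun β => LinearMap.toContinuousLinearMap (Sigc β).mulVecLin
  -- build the continuous linear equivalence with coercion `-(M β₀)`
  have hinj : Function.Injective (Sigc β₀).mulVecLin := by
    rw [← LinearMap.ker_eq_bot, LinearMap.ker_eq_bot']
    intro x hx
    by_contra h
    have h2 := hSigPos.dotProduct_mulVec_pos h
    rw [Matrix.mulVecLin_apply] at hx
    rw [hx, dotProduct_zero] at h2
    exact lt_irrefl 0 h2
  have hbij : Function.Bijective (Sigc β₀).mulVecLin :=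
    ⟨hinj, (LinearMap.injective_iff_surjective).1 hinj⟩
  let e : (Fin p → ℝ) ≃L[ℝ] (Fin p → ℝ) :=
    ((LinearEquiv.ofBijective (Sigc β₀).mulVecLin hbij).trans
      (LinearEquiv.neg ℝ)).toContinuousLinearEquiv
  have hcoe : (e : (Fin p → ℝ) →L[ℝ] (Fin p → ℝ)) = -(M β₀) := by
    ext x
    simp [e, M]
  -- the norm of the inverse is positive
  have hN0 : ‖(e.symm : (Fin p → ℝ) →L[ℝ] (Fin p → ℝ))‖₊ ≠ 0 := by
    intro h
    rw [nnnorm_eq_zero] at h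
    have hx : (Pi.single (⟨0, hp⟩ : Fin p) 1 : Fin p → ℝ) ≠ 0 := by
      intro hc
      have := congrFun hc ⟨0, hp⟩
      simp at this
    apply hx
    calc (Pi.single (⟨0, hp⟩ : Fin p) 1 : Fin p → ℝ)
        = e.symm (e (Pi.single (⟨0, hp⟩ : Fin p) 1)) := (e.symm_apply_apply _).symm
      _ = 0 := by rw [show (e.symm : (Fin p → ℝ) → (Fin p → ℝ)) = ((e.symm :
            (Fin p → ℝ) →L[ℝ] (Fin p → ℝ)) : (Fin p → ℝ) → (Fin p → ℝ)) from rfl, h]; simp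
  set N : ℝ≥0 := ‖(e.symm : (Fin p → ℝ) →L[ℝ] (Fin p → ℝ))‖₊ with hN
  have hNpos : (0 : ℝ) < (N : ℝ) := by
    have : 0 < N := pos_iff_ne_zero.mpr hN0
    exact_mod_cast this
  -- the approximation constant
  set cnn : ℝ≥0 := N⁻¹ / 2 with hcnn
  have hcnnN : cnn < N⁻¹ := by
    rw [hcnn]
    exact NNReal.half_lt_self (by simp [hN0])
  have hc : (cnn : ℝ) = (N : ℝ)⁻¹ / 2 := by
    rw [hcnn]; push_cast; ring
  have hcpos : (0 : ℝ) < (cnn : ℝ) := by rw [hc]; positivity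
  -- continuity of `M` at β₀: pick δ₀ such that ‖M β - M β₀‖ < c/2 on the ball
  have hMcont : ContinuousAt M β₀ := by
    have hL : Continuous fun S : Matrix (Fin p) (Fin p) ℝ =>
        LinearMap.toContinuousLinearMap S.mulVecLin := by
      let L : Matrix (Fin p) (Fin p) ℝ →ₗ[ℝ] ((Fin p → ℝ) →L[ℝ] (Fin p → ℝ)) :=
        { toFun := fun S => LinearMap.toContinuousLinearMap S.mulVecLin
          map_add' := by intro S T; ext x i; simp [Matrix.add_mulVec]
          map_smul' := by intro a S; ext x i; simp [Matrix.smul_mulVec] }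
      exact L.continuous_of_finiteDimensional
    exact hL.continuousAt.comp hSigCont
  obtain ⟨δ₀, hδ₀pos, hδ₀⟩ : ∃ δ₀ > 0, ∀ β : Fin p → ℝ,
      dist β β₀ < δ₀ → ‖M β - M β₀‖ < (cnn : ℝ) / 2 := by
    have := Metric.continuousAt_iff.mp hMcont ((cnn : ℝ) / 2) (by positivity)
    obtain ⟨δ₀, hδ₀pos, h⟩ := this
    exact ⟨δ₀, hδ₀pos, fun β hβ => by
      have := h hβ
      rwa [dist_eq_norm] at this⟩
  -- choose the radius δ and the thresholds
  set δ : ℝ := min (δ₀ / 2) (r / 2) with hδdef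
  have hδpos : 0 < δ := lt_min (by positivity) (by positivity)
  have hδr : Metric.closedBall β₀ δ ⊆ Metric.ball β₀ r := by
    intro x hx
    rw [Metric.mem_closedBall] at hx
    rw [Metric.mem_ball]
    calc dist x β₀ ≤ δ := hx
      _ ≤ r / 2 := min_le_right _ _
      _ < r := by linarith
  have hδδ₀ : ∀ x ∈ Metric.closedBall β₀ δ, dist x β₀ < δ₀ := by
    intro x hx
    rw [Metric.mem_closedBall] at hx
    calc dist x β₀ ≤ δ := hx
      _ ≤ δ₀ / 2 := min_le_left _ _
      _ < δ₀ := by linarith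
  set η : ℝ := (cnn : ℝ) * δ with hη
  have hηpos : 0 < η := by rw [hη]; positivity
  -- the deterministic key lemma
  have key : ∀ m ω, ‖U m ω β₀‖ < η →
      (∀ β ∈ Metric.ball β₀ r, ‖DU m ω β + M β‖ < (cnn : ℝ) / 2) →
      ∃ β ∈ Metric.ball β₀ r, U m ω β = 0 := by
    intro m ω hU0 hDUb
    -- approximation on the closed ball
    have happrox : ApproximatesLinearOn (U m ω) (e : (Fin p → ℝ) →L[ℝ] (Fin p → ℝ))
        (Metric.closedBall β₀ δ) cnn := by
      intro x hx y hy
      have hbd : ∀ z ∈ Metric.closedBall β₀ δ,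
          ‖DU m ω z - (e : (Fin p → ℝ) →L[ℝ] (Fin p → ℝ))‖ ≤ (cnn : ℝ) := by
        intro z hz
        rw [hcoe, sub_neg_eq_add]
        have h1 : ‖DU m ω z + M z‖ < (cnn : ℝ) / 2 := hDUb z (hδr hz)
        have h2 : ‖M z - M β₀‖ < (cnn : ℝ) / 2 := hδ₀ z (hδδ₀ z hz)
        calc ‖DU m ω z + M β₀‖ = ‖(DU m ω z + M z) + (M β₀ - M z)‖ := by congr 1; abel
          _ ≤ ‖DU m ω z + M z‖ + ‖M β₀ - M z‖ := norm_add_le _ _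
          _ = ‖DU m ω z + M z‖ + ‖M z - M β₀‖ := by rw [norm_sub_rev]
          _ ≤ (cnn : ℝ) / 2 + (cnn : ℝ) / 2 := by linarith
          _ = (cnn : ℝ) := by ring
      have := (convex_closedBall β₀ δ).norm_image_sub_le_of_norm_hasFDerivWithin_le'
        (fun z hz => (hDU m ω z).hasFDerivWithinAt) hbd hy hx
      simpa using this
    -- surjectivity onto a small ball around `U m ω β₀`
    have hsurj := happrox.surjOn_closedBall_of_nonlinearRightInverse
      e.toNonlinearRightInverse (le_of_lt hδpos) (subset_refl _)
    have hmem : (0 : Fin p → ℝ) ∈ Metric.closedBall (U m ω β₀)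
        (((e.toNonlinearRightInverse.nnnorm : ℝ)⁻¹ - cnn) * δ) := by
      rw [Metric.mem_closedBall]
      have hnn : (e.toNonlinearRightInverse.nnnorm : ℝ) = (N : ℝ) := rfl
      rw [dist_comm, dist_zero_right, hnn]
      have : (N : ℝ)⁻¹ - (cnn : ℝ) = (cnn : ℝ) := by rw [hc]; ring
      rw [this]
      exact le_of_lt hU0
    obtain ⟨β, hβmem, hβ⟩ := hsurj hmem
    exact ⟨β, hδr hβmem, hβ⟩
  -- now the probabilistic part
  have hgradβ₀ : (fun i => fderiv ℝ f β₀ (Pi.single i 1)) = (0 : Fin p → ℝ) := by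
    funext i; rw [hβ₀root]; simp
  have ha : Tendsto (fun m => P {ω | η ≤ dist (U m ω β₀)
      (fun i => fderiv ℝ f β₀ (Pi.single i 1))}) atTop (𝓝 0) :=
    tendstoInMeasure_iff_dist.mp (hUconv β₀) η hηpos
  have hb : Tendsto (fun m => P {ω | ∃ β ∈ Metric.ball β₀ r,
      (cnn : ℝ) / 2 ≤ ‖DU m ω β + LinearMap.toContinuousLinearMap (Sigc β).mulVecLin‖})
      atTop (𝓝 0) := hUnif ((cnn : ℝ) / 2) (by positivity)
  -- lower bound for the root probability
  have hlow : ∀ m, 1 - (P {ω | η ≤ dist (U m ω β₀)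
        (fun i => fderiv ℝ f β₀ (Pi.single i 1))} +
        P {ω | ∃ β ∈ Metric.ball β₀ r,
        (cnn : ℝ) / 2 ≤ ‖DU m ω β + LinearMap.toContinuousLinearMap (Sigc β).mulVecLin‖})
      ≤ P {ω | ∃ β ∈ Metric.ball β₀ r, U m ω β = 0} := by
    intro m
    rw [tsub_le_iff_right]
    have hsub : {ω | ∃ β ∈ Metric.ball β₀ r, U m ω β = 0}ᶜ ⊆
        {ω | η ≤ dist (U m ω β₀) (fun i => fderiv ℝ f β₀ (Pi.single i 1))} ∪
        {ω | ∃ β ∈ Metric.ball β₀ r,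
          (cnn : ℝ) / 2 ≤ ‖DU m ω β + LinearMap.toContinuousLinearMap (Sigc β).mulVecLin‖} := by
      intro ω hω
      rw [Set.mem_union]
      by_contra hc2
      push_neg at hc2
      obtain ⟨h1, h2⟩ := hc2
      simp only [Set.mem_setOf_eq, not_le] at h1 h2
      apply hω
      have hU0 : ‖U m ω β₀‖ < η := by
        rw [hgradβ₀, dist_zero_right] at h1
        exact h1
      have hDUb : ∀ β ∈ Metric.ball β₀ r, ‖DU m ω β + M β‖ < (cnn : ℝ) / 2 := by
        intro β hβ
        by_contra hc3
        push_neg at hc3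
        exact h2 ⟨β, hβ, hc3⟩
      exact key m ω hU0 hDUb
    calc (1 : ℝ≥0∞) = P Set.univ := (measure_univ).symm
      _ = P ({ω | ∃ β ∈ Metric.ball β₀ r, U m ω β = 0} ∪
          {ω | ∃ β ∈ Metric.ball β₀ r, U m ω β = 0}ᶜ) := by rw [Set.union_compl_self]
      _ ≤ P {ω | ∃ β ∈ Metric.ball β₀ r, U m ω β = 0} +
          P ({ω | ∃ β ∈ Metric.ball β₀ r, U m ω β = 0}ᶜ) := measure_union_le _ _
      _ ≤ P {ω | ∃ β ∈ Metric.ball β₀ r, U m ω β = 0} +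
          (P {ω | η ≤ dist (U m ω β₀) (fun i => fderiv ℝ f β₀ (Pi.single i 1))} +
          P {ω | ∃ β ∈ Metric.ball β₀ r,
            (cnn : ℝ) / 2 ≤ ‖DU m ω β + LinearMap.toContinuousLinearMap (Sigc β).mulVecLin‖}) := by
        gcongr
        exact le_trans (measure_mono hsub) (measure_union_le _ _)
  -- squeeze
  have hlowtend : Tendsto (fun m => 1 - (P {ω | η ≤ dist (U m ω β₀)
        (fun i => fderiv ℝ f β₀ (Pi.single i 1))} +
        P {ω | ∃ β ∈ Metric.ball β₀ r,
        (cnn : ℝ) / 2 ≤ ‖DU m ω β + LinearMap.toContinuousLinearMap (Sigc β).mulVecLin‖}))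
      atTop (𝓝 1) := by
    have := ENNReal.Tendsto.sub (tendsto_const_nhds (x := (1 : ℝ≥0∞)))
      (ha.add hb) (Or.inl ENNReal.one_ne_top)
    simpa using this
  exact tendsto_of_tendsto_of_tendsto_of_le_of_le hlowtend tendsto_const_nhds hlow
    (fun m => prob_le_one)
end

section
/- Let T₁ and T₂ be independent real-valued random variables on a probability space such that P(T_j > t) = exp(−(t/λ_j)^k) for all t ≥ 0 and j = 1, 2, where λ₁, λ₂ > 0 are scale parameters and k > 0 is a common shape parameter (i.e., T₁ and T₂ are Weibull distributed with equal shape). Then for every τ > 0, P(min(T₁,τ) > min(T₂,τ)) = (1 − exp(−τ^k·(λ₁^{−k} + λ₂^{−k})))·λ₁^k/(λ₁^k + λ₂^k) = (1 − S₁(τ)S₂(τ))·λ₁^k/(λ₁^k + λ₂^k), where S_j(τ) = exp(−(τ/λ_j)^k). -/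
open MeasureTheory Filter Set Topology

-- left limit of survival function
lemma surv_le {μ : Measure ℝ} [IsProbabilityMeasure μ] {lam k : ℝ} (hlam : 0 < lam) (hk : 0 < k)
    (hS : ∀ t : ℝ, 0 ≤ t → μ {x | t < x} = ENNReal.ofReal (Real.exp (-((t / lam) ^ k))))
    {c : ℝ} (hc : 0 < c) :
    μ {x | c ≤ x} = ENNReal.ofReal (Real.exp (-((c / lam) ^ k))) := by
  set t : ℕ → ℝ := fun n => c - c / (n + 1) with ht
  have htnn : ∀ n, 0 ≤ t n := by
    intro n
    have h1 : c / (n+1) ≤ c / 1 := by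
      apply div_le_div_of_nonneg_left hc.le one_pos
      exact_mod_cast Nat.succ_le_succ (Nat.zero_le n)
    simp only [ht]; linarith [h1]
  have htlt : ∀ n, t n < c := by
    intro n
    have : 0 < c / (n+1) := div_pos hc (by positivity)
    simp only [ht]; linarith
  have htmono : Monotone t := by
    intro a b hab
    have : c / (b+1) ≤ c / (a+1) := by
      apply div_le_div_of_nonneg_left hc.le (by positivity)
      exact_mod_cast Nat.succ_le_succ hab
    simp only [ht]; linarith
  have htend : Tendsto t atTop (𝓝 c) := by
    have h0 : Tendsto (fun n : ℕ => c / ((n:ℝ) + 1)) atTop (𝓝 0) := by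
      have := (tendsto_const_div_atTop_nhds_zero_nat c).comp (tendsto_add_atTop_nat 1)
      apply this.congr
      intro n; simp only [Function.comp]; push_cast; ring
    simpa using (tendsto_const_nhds (x := c)).sub h0
  set s : ℕ → Set ℝ := fun n => {x | t n < x} with hs
  have hanti : Antitone s := fun a b hab x hx => lt_of_le_of_lt (htmono hab) hx
  have hInter : ⋂ n, s n = {x | c ≤ x} := by
    ext x; simp only [mem_iInter, hs, mem_setOf_eq]
    constructor
    · intro h
      exact le_of_tendsto htend (Eventually.of_forall fun n => (h n).le)
    · intro h n; exact lt_of_lt_of_le (htlt n) h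
  have h1 : Tendsto (μ ∘ s) atTop (𝓝 (μ (⋂ n, s n))) := by
    apply tendsto_measure_iInter_atTop
    · exact fun n => (measurableSet_Ioi (a := t n)).nullMeasurableSet
    · exact hanti
    · exact ⟨0, measure_ne_top μ _⟩
  rw [hInter] at h1
  have h2 : Tendsto (μ ∘ s) atTop (𝓝 (ENNReal.ofReal (Real.exp (-((c / lam) ^ k))))) := by
    have heq : (μ ∘ s) = fun n => ENNReal.ofReal (Real.exp (-((t n / lam) ^ k))) := by
      funext n; exact hS (t n) (htnn n)
    rw [heq]
    apply ENNReal.tendsto_ofReal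
    apply Real.continuous_exp.continuousAt.tendsto.comp
    apply Tendsto.neg
    have hcont : ContinuousAt (fun u : ℝ => (u / lam) ^ k) c := by
      apply ContinuousAt.rpow_const
      · exact continuousAt_id.div_const lam
      · left; positivity
    exact hcont.tendsto.comp htend
  exact tendsto_nhds_unique h1 h2

-- the FTC integral
lemma ftc_int {r M : ℝ} (hr : 0 < r) (hM0 : 0 ≤ M) (hM1 : M < 1) :
    ∫ s in (0:ℝ)..M, (1 - s) ^ r = (1 - (1 - M) ^ (r + 1)) / (r + 1) := by
  have hd : ∀ s ∈ Set.uIcc (0:ℝ) M,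
      HasDerivAt (fun u => -((1 - u) ^ (r+1)) / (r+1)) ((1 - s) ^ r) s := by
    intro s hsm
    rw [Set.uIcc_of_le hM0] at hsm
    have hs1 : 0 < 1 - s := by linarith [hsm.2]
    have h1 : HasDerivAt (fun u : ℝ => 1 - u) (-1) s := by
      simpa using (hasDerivAt_id s).const_sub 1
    have h2 : HasDerivAt (fun x : ℝ => x ^ (r+1)) ((r+1) * (1-s) ^ (r+1-1)) (1-s) :=
      Real.hasDerivAt_rpow_const (Or.inl hs1.ne')
    have h3 := h2.comp s h1
    have h4 : HasDerivAt (fun u => -((1 - u) ^ (r+1)) / (r+1))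
        (-((r + 1) * (1 - s) ^ (r + 1 - 1) * -1 / (r + 1))) s := by
      have := (h3.div_const (r+1)).neg
      simpa [Function.comp, neg_div, Pi.neg_def] using this
    have heq : -((r + 1) * (1 - s) ^ (r + 1 - 1) * -1 / (r + 1)) = (1-s)^r := by
      rw [show r + 1 - 1 = r by ring]
      field_simp
    rwa [heq] at h4
  have hcont : ContinuousOn (fun s : ℝ => (1 - s) ^ r) (Set.uIcc 0 M) := by
    apply ContinuousOn.rpow_const
    · exact (continuous_const.sub continuous_id).continuousOn
    · intro x hx
      rw [Set.uIcc_of_le hM0] at hx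
      left; nlinarith [hx.2]
  have := intervalIntegral.integral_eq_sub_of_hasDerivAt hd (hcont.intervalIntegrable)
  rw [this]
  rw [show (1:ℝ) - 0 = 1 by ring, Real.one_rpow]
  ring

/-- Closed-form expression for the τ-truncated relative treatment effect
`P(min(T₁,τ) > min(T₂,τ))` under independent Weibull event times with common shape `k`. -/
theorem truncated_relative_treatment_effect_weibull
    {Ω : Type*} [MeasurableSpace Ω] (P : Measure Ω) [IsProbabilityMeasure P]
    (T1 T2 : Ω → ℝ) (hT1 : Measurable T1) (hT2 : Measurable T2)
    (hindep : ProbabilityTheory.IndepFun T1 T2 P)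
    (lam1 lam2 k : ℝ) (hlam1 : 0 < lam1) (hlam2 : 0 < lam2) (hk : 0 < k)
    (hS1 : ∀ t : ℝ, 0 ≤ t → P {ω | t < T1 ω} = ENNReal.ofReal (Real.exp (-((t / lam1) ^ k))))
    (hS2 : ∀ t : ℝ, 0 ≤ t → P {ω | t < T2 ω} = ENNReal.ofReal (Real.exp (-((t / lam2) ^ k))))
    (τ : ℝ) (hτ : 0 < τ) :
    P {ω | min (T2 ω) τ < min (T1 ω) τ}
        = ENNReal.ofReal ((1 - Real.exp (-(τ ^ k * (lam1 ^ (-k) + lam2 ^ (-k)))))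
            * (lam1 ^ k / (lam1 ^ k + lam2 ^ k))) ∧
      P {ω | min (T2 ω) τ < min (T1 ω) τ}
        = ENNReal.ofReal ((1 - Real.exp (-((τ / lam1) ^ k)) * Real.exp (-((τ / lam2) ^ k)))
            * (lam1 ^ k / (lam1 ^ k + lam2 ^ k))) := by
  set μ1 : Measure ℝ := P.map T1 with hμ1def
  set μ2 : Measure ℝ := P.map T2 with hμ2def
  have inst1 : IsProbabilityMeasure μ1 := Measure.isProbabilityMeasure_map hT1.aemeasurable
  have inst2 : IsProbabilityMeasure μ2 := Measure.isProbabilityMeasure_map hT2.aemeasurable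
  have hm1 : ∀ t : ℝ, 0 ≤ t → μ1 {x | t < x} = ENNReal.ofReal (Real.exp (-((t / lam1) ^ k))) := by
    intro t ht
    rw [hμ1def, show {x : ℝ | t < x} = Ioi t from rfl, Measure.map_apply hT1 measurableSet_Ioi]
    exact hS1 t ht
  have hm2 : ∀ t : ℝ, 0 ≤ t → μ2 {x | t < x} = ENNReal.ofReal (Real.exp (-((t / lam2) ^ k))) := by
    intro t ht
    rw [hμ2def, show {x : ℝ | t < x} = Ioi t from rfl, Measure.map_apply hT2 measurableSet_Ioi]
    exact hS2 t ht
  -- step 1 : event rewriting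
  have hev : {ω | min (T2 ω) τ < min (T1 ω) τ}
      = (fun ω => (T1 ω, T2 ω)) ⁻¹' {p : ℝ × ℝ | p.2 < min p.1 τ} := by
    ext ω
    simp only [mem_setOf_eq, mem_preimage]
    constructor
    · intro h
      have h2 : min (T2 ω) τ < τ := lt_of_lt_of_le h (min_le_right _ _)
      have h3 : T2 ω < τ := by
        rcases min_lt_iff.mp h2 with h' | h'
        · exact h'
        · exact absurd h' (lt_irrefl _)
      rwa [min_eq_left h3.le] at h
    · intro h
      exact lt_of_le_of_lt (min_le_left _ _) h
  have hSmeas : MeasurableSet {p : ℝ × ℝ | p.2 < min p.1 τ} :=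
    measurableSet_lt measurable_snd (measurable_fst.min measurable_const)
  -- step 2 : product measure
  have hprod : P.map (fun ω => (T1 ω, T2 ω)) = μ1.prod μ2 :=
    (ProbabilityTheory.indepFun_iff_map_prod_eq_prod_map_map hT1.aemeasurable
      hT2.aemeasurable).mp hindep
  have hstep2 : P {ω | min (T2 ω) τ < min (T1 ω) τ}
      = ∫⁻ x, μ2 {y | y < min x τ} ∂μ1 := by
    rw [hev, ← Measure.map_apply (hT1.prodMk hT2) hSmeas, hprod, Measure.prod_apply hSmeas]
    rfl
  -- step 4 : pointwise value of inner measure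
  set g : ℝ → ℝ := fun x => 1 - Real.exp (-((max (min x τ) 0 / lam2) ^ k)) with hgdef
  have hzero_rpow : ((0:ℝ) / lam2) ^ k = 0 := by
    rw [zero_div, Real.zero_rpow hk.ne']
  have hμ2Ioi : μ2 (Ioi (0:ℝ)) = 1 := by
    have h := hm2 0 le_rfl
    rw [hzero_rpow] at h
    have h' : μ2 {x : ℝ | 0 < x} = 1 := by simpa using h
    exact h'
  have hμ2neg : μ2 {y : ℝ | ¬ (0:ℝ) < y} = 0 := by
    have hc : {y : ℝ | ¬ (0:ℝ) < y} = (Ioi (0:ℝ))ᶜ := by ext y; simp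
    rw [hc, measure_compl measurableSet_Ioi (measure_ne_top _ _), hμ2Ioi, measure_univ]
    simp
  have hg : ∀ x : ℝ, μ2 {y | y < min x τ} = ENNReal.ofReal (g x) := by
    intro x
    rcases le_or_gt x 0 with hx | hx
    · have hmin : min x τ = x := min_eq_left (le_of_lt (lt_of_le_of_lt hx hτ))
      have hmax : max (min x τ) 0 = 0 := by rw [hmin]; exact max_eq_right hx
      have h0 : μ2 {y | y < min x τ} = 0 := by
        refine le_antisymm ?_ (zero_le)
        rw [← hμ2neg]
        apply measure_mono
        intro y hy
        simp only [mem_setOf_eq, hmin] at hy ⊢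
        intro h0y; exact absurd (lt_trans h0y hy) (not_lt.mpr hx)
      rw [h0, hgdef]
      simp only [hmax, hzero_rpow]
      simp
    · have hc : 0 < min x τ := lt_min hx hτ
      have hmax : max (min x τ) 0 = min x τ := max_eq_left hc.le
      have hcompl : {y : ℝ | y < min x τ} = {y : ℝ | min x τ ≤ y}ᶜ := by
        ext y; simp [not_le]
      have hmble : MeasurableSet {y : ℝ | min x τ ≤ y} := measurableSet_Ici
      rw [hcompl, measure_compl hmble (measure_ne_top _ _), surv_le hlam2 hk hm2 hc,
        measure_univ, hgdef]
      simp only [hmax]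
      rw [← ENNReal.ofReal_one, ← ENNReal.ofReal_sub _ (Real.exp_nonneg _)]
  -- step 5 : layer cake
  have hgnn : ∀ x, 0 ≤ g x := by
    intro x
    have h1 : Real.exp (-((max (min x τ) 0 / lam2) ^ k)) ≤ 1 := by
      rw [Real.exp_le_one_iff]
      have : (0:ℝ) ≤ (max (min x τ) 0 / lam2) ^ k :=
        Real.rpow_nonneg (div_nonneg (le_max_right _ _) hlam2.le) k
      linarith
    simp only [hgdef]; linarith
  have hgc : Continuous g := by
    apply Continuous.sub continuous_const
    apply Real.continuous_exp.comp
    apply Continuous.neg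
    exact (Real.continuous_rpow_const hk.le).comp
      (((continuous_id.min continuous_const).max continuous_const).div_const lam2)
  have hstep5 : ∫⁻ x, ENNReal.ofReal (g x) ∂μ1 = ∫⁻ s in Ioi (0:ℝ), μ1 {x | s < g x} :=
    lintegral_eq_lintegral_meas_lt μ1 (ae_of_all _ hgnn) hgc.measurable.aemeasurable
  -- constants
  set r : ℝ := (lam2 / lam1) ^ k with hrdef
  set M : ℝ := 1 - Real.exp (-((τ / lam2) ^ k)) with hMdef
  have hr : 0 < r := Real.rpow_pos_of_pos (div_pos hlam2 hlam1) k
  have hτk : 0 < (τ / lam2) ^ k := Real.rpow_pos_of_pos (div_pos hτ hlam2) k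
  have hM0 : 0 < M := by
    have : Real.exp (-((τ / lam2) ^ k)) < 1 := by
      rw [Real.exp_lt_one_iff]; linarith
    simp only [hMdef]; linarith
  have hM1 : M < 1 := by
    have : 0 < Real.exp (-((τ / lam2) ^ k)) := Real.exp_pos _
    simp only [hMdef]; linarith
  -- step 6 : superlevel sets
  have h7a : ∀ s : ℝ, M ≤ s → {x : ℝ | s < g x} = ∅ := by
    intro s hs
    ext x
    simp only [mem_setOf_eq, mem_empty_iff_false, iff_false, not_lt]
    have hmle : max (min x τ) 0 ≤ τ := max_le (min_le_right _ _) hτ.le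
    have hdiv : max (min x τ) 0 / lam2 ≤ τ / lam2 := by gcongr
    have h2 : (max (min x τ) 0 / lam2) ^ k ≤ (τ / lam2) ^ k :=
      Real.rpow_le_rpow (div_nonneg (le_max_right _ _) hlam2.le) hdiv hk.le
    have hexp : Real.exp (-((τ / lam2) ^ k)) ≤ Real.exp (-((max (min x τ) 0 / lam2) ^ k)) :=
      Real.exp_le_exp.mpr (by linarith)
    calc g x ≤ M := by simp only [hgdef, hMdef]; linarith
    _ ≤ s := hs
  have h7b : ∀ s : ℝ, 0 < s → s < M → μ1 {x : ℝ | s < g x} = ENNReal.ofReal ((1 - s) ^ r) := by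
    intro s hs hsM
    have h1s : 0 < 1 - s := by linarith
    set L : ℝ := -Real.log (1 - s) with hLdef
    have hL : 0 < L := by
      have := Real.log_neg h1s (by linarith)
      simp only [hLdef]; linarith
    have hLτ : L < (τ / lam2) ^ k := by
      have hes : Real.exp (-((τ / lam2) ^ k)) < 1 - s := by simp only [hMdef] at hsM; linarith
      have := (Real.lt_log_iff_exp_lt h1s).mpr hes
      simp only [hLdef]; linarith
    have hLik : ∀ b : ℝ, 0 ≤ b → (L < b ^ k ↔ L ^ (1/k) < b) := by
      intro b hb
      constructor
      · intro h
        have h1 : L ^ (1/k) < (b ^ k) ^ (1/k) :=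
          Real.rpow_lt_rpow hL.le h (by positivity)
        rwa [← Real.rpow_mul hb, mul_one_div_cancel hk.ne', Real.rpow_one] at h1
      · intro h
        have h1 : (L ^ (1/k)) ^ k < b ^ k :=
          Real.rpow_lt_rpow (Real.rpow_nonneg hL.le _) h hk
        rwa [← Real.rpow_mul hL.le, one_div_mul_cancel hk.ne', Real.rpow_one] at h1
    set ξ : ℝ := lam2 * L ^ (1/k) with hξdef
    have hξ0 : 0 < ξ := mul_pos hlam2 (Real.rpow_pos_of_pos hL _)
    have hξτ : ξ < τ := by
      have h1 : L ^ (1/k) < τ / lam2 := (hLik (τ/lam2) (by positivity)).mp hLτ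
      calc ξ = lam2 * L ^ (1/k) := rfl
      _ < lam2 * (τ / lam2) := (mul_lt_mul_iff_right₀ hlam2).mpr h1
      _ = τ := by field_simp
    have key : ∀ x : ℝ, s < g x ↔ ξ < x := by
      intro x
      have hmnn : (0:ℝ) ≤ max (min x τ) 0 := le_max_right _ _
      have e1 : s < g x ↔ Real.exp (-((max (min x τ) 0 / lam2) ^ k)) < 1 - s := by
        simp only [hgdef]; constructor <;> intro <;> linarith
      have e2 : Real.exp (-((max (min x τ) 0 / lam2) ^ k)) < 1 - s
          ↔ -((max (min x τ) 0 / lam2) ^ k) < Real.log (1 - s) :=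
        (Real.lt_log_iff_exp_lt h1s).symm
      have e3 : -((max (min x τ) 0 / lam2) ^ k) < Real.log (1 - s)
          ↔ L < (max (min x τ) 0 / lam2) ^ k := by
        simp only [hLdef]; constructor <;> intro <;> linarith
      have e4 : L < (max (min x τ) 0 / lam2) ^ k ↔ L ^ (1/k) < max (min x τ) 0 / lam2 :=
        hLik _ (div_nonneg hmnn hlam2.le)
      have e5 : L ^ (1/k) < max (min x τ) 0 / lam2 ↔ ξ < max (min x τ) 0 := by
        rw [lt_div_iff₀ hlam2, hξdef, mul_comm (L ^ (1/k)) lam2]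
      have e6 : ξ < max (min x τ) 0 ↔ ξ < x := by
        constructor
        · intro h
          rcases lt_max_iff.mp h with h' | h'
          · exact (lt_min_iff.mp h').1
          · exact absurd h' (not_lt.mpr hξ0.le)
        · intro h
          exact lt_max_iff.mpr (Or.inl (lt_min_iff.mpr ⟨h, hξτ⟩))
      exact e1.trans (e2.trans (e3.trans (e4.trans (e5.trans e6))))
    have hset : {x : ℝ | s < g x} = {x : ℝ | ξ < x} := by
      ext x; exact key x
    rw [hset, hm1 ξ hξ0.le]
    congr 1
    have hξlam : ξ / lam1 = (lam2 / lam1) * L ^ (1/k) := by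
      rw [hξdef]; ring
    rw [hξlam, Real.mul_rpow (div_nonneg hlam2.le hlam1.le) (Real.rpow_nonneg hL.le _),
      ← Real.rpow_mul hL.le, one_div_mul_cancel hk.ne', Real.rpow_one,
      Real.rpow_def_of_pos h1s]
    congr 1
    simp only [hLdef, ← hrdef]
    ring
  -- step 7 : compute the outer integral
  have hsplit : ∫⁻ s in Ioi (0:ℝ), μ1 {x | s < g x}
      = ENNReal.ofReal ((1 - (1 - M) ^ (r + 1)) / (r + 1)) := by
    rw [← Ioo_union_Ici_eq_Ioi hM0,
      lintegral_union measurableSet_Ici ((Iio_disjoint_Ici le_rfl).mono_left Ioo_subset_Iio_self)]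
    have hzero : ∫⁻ s in Ici M, μ1 {x | s < g x} = 0 := by
      have h0 : ∀ᵐ s ∂volume, s ∈ Ici M → μ1 {x | s < g x} = (0 : ENNReal) := by
        apply ae_of_all
        intro s hs
        rw [h7a s hs]
        exact measure_empty
      rw [setLIntegral_congr_fun_ae measurableSet_Ici h0, lintegral_zero]
    have hmain : ∫⁻ s in Ioo (0:ℝ) M, μ1 {x | s < g x}
        = ENNReal.ofReal ((1 - (1 - M) ^ (r + 1)) / (r + 1)) := by
      have h1 : ∫⁻ s in Ioo (0:ℝ) M, μ1 {x | s < g x}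
          = ∫⁻ s in Ioo (0:ℝ) M, ENNReal.ofReal ((1 - s) ^ r) := by
        apply setLIntegral_congr_fun_ae measurableSet_Ioo
        apply ae_of_all
        intro s hs
        exact h7b s hs.1 hs.2
      rw [h1, setLIntegral_congr Ioo_ae_eq_Ioc]
      have hcont : ContinuousOn (fun s : ℝ => (1 - s) ^ r) (Set.uIcc 0 M) := by
        apply ContinuousOn.rpow_const
        · exact (continuous_const.sub continuous_id).continuousOn
        · intro x hx
          rw [Set.uIcc_of_le hM0.le] at hx
          left; nlinarith [hx.2, hM1]
      have hint : IntegrableOn (fun s : ℝ => (1 - s) ^ r) (Ioc 0 M) volume := by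
        have := hcont.intervalIntegrable (μ := volume)
        rwa [intervalIntegrable_iff_integrableOn_Ioc_of_le hM0.le] at this
      have hnn : 0 ≤ᵐ[volume.restrict (Ioc (0:ℝ) M)] fun s : ℝ => (1 - s) ^ r := by
        apply (ae_restrict_iff' measurableSet_Ioc).mpr
        apply ae_of_all
        intro s hs
        exact Real.rpow_nonneg (by linarith [hs.2, hM1]) r
      rw [← ofReal_integral_eq_lintegral_ofReal hint hnn]
      congr 1
      rw [← intervalIntegral.integral_of_le hM0.le]
      exact ftc_int hr hM0.le hM1
    rw [hzero, hmain, add_zero]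
  -- value of the probability
  have hval : P {ω | min (T2 ω) τ < min (T1 ω) τ}
      = ENNReal.ofReal ((1 - (1 - M) ^ (r + 1)) / (r + 1)) := by
    rw [hstep2, lintegral_congr hg, hstep5, hsplit]
  -- final arithmetic
  have hl1k : (0:ℝ) < lam1 ^ k := Real.rpow_pos_of_pos hlam1 k
  have hl2k : (0:ℝ) < lam2 ^ k := Real.rpow_pos_of_pos hlam2 k
  have hB : ((1 - M):ℝ) ^ (r + 1) = Real.exp (-((τ/lam1)^k + (τ/lam2)^k)) := by
    have hA : (1 - M : ℝ) = Real.exp (-((τ/lam2)^k)) := by simp [hMdef]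
    rw [hA, Real.rpow_def_of_pos (Real.exp_pos _), Real.log_exp]
    congr 1
    have hrr : (τ/lam2)^k * r = (τ/lam1)^k := by
      rw [hrdef, ← Real.mul_rpow (by positivity) (by positivity)]
      congr 1
      field_simp
    linear_combination -hrr
  have hC : r + 1 = (lam1^k + lam2^k)/lam1^k := by
    rw [hrdef, Real.div_rpow hlam2.le hlam1.le]
    field_simp
    ring
  have hD : (1 - (1 - M) ^ (r + 1))/(r + 1)
      = (1 - Real.exp (-((τ/lam1)^k + (τ/lam2)^k))) * (lam1^k/(lam1^k+lam2^k)) := by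
    rw [hB, hC]
    field_simp
  constructor
  · rw [hval, hD]
    congr 2
    rw [Real.rpow_neg hlam1.le, Real.rpow_neg hlam2.le, Real.div_rpow hτ.le hlam1.le,
      Real.div_rpow hτ.le hlam2.le]
    ring
  · rw [hval, hD]
    congr 2
    rw [← Real.exp_add]
    congr 1
    ring
end

section
/- Let T₁ and T₂ be independent real-valued random variables on a probability space and let τ ∈ ℝ. Then P(min(T₁,τ) = min(T₂,τ)) = P(T₁ ≥ τ)·P(T₂ ≥ τ) + Σ_{t < τ} P(T₁ = t)·P(T₂ = t), where the sum extends over all real t < τ and has at most countably many nonzero terms (interpreted as a tsum over {t ∈ ℝ : t < τ}). -/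
open MeasureTheory

/-- Decomposition of the tie probability of τ-truncated event times:
`P(min(T₁,τ) = min(T₂,τ)) = P(T₁ ≥ τ)P(T₂ ≥ τ) + Σ_{t<τ} P(T₁ = t)P(T₂ = t)`. -/
theorem tie_probability_decomposition
    {Ω : Type*} [MeasurableSpace Ω] (P : Measure Ω) [IsProbabilityMeasure P]
    (T1 T2 : Ω → ℝ) (hT1 : Measurable T1) (hT2 : Measurable T2)
    (hindep : ProbabilityTheory.IndepFun T1 T2 P) (τ : ℝ) :
    P {ω | min (T1 ω) τ = min (T2 ω) τ}
      = P {ω | τ ≤ T1 ω} * P {ω | τ ≤ T2 ω}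
        + ∑' t : {t : ℝ // t < τ}, P {ω | T1 ω = (t : ℝ)} * P {ω | T2 ω = (t : ℝ)} := by
  classical
  set μ1 := P.map T1 with hμ1
  set μ2 := P.map T2 with hμ2
  -- the diagonal part below τ
  set D : Set (ℝ × ℝ) := {p : ℝ × ℝ | p.1 = p.2 ∧ p.1 < τ} with hDdef
  have hD : MeasurableSet D := by
    apply MeasurableSet.inter
    · exact measurableSet_eq_fun measurable_fst measurable_snd
    · exact measurable_fst measurableSet_Iio
  set A : Set Ω := T1 ⁻¹' Set.Ici τ ∩ T2 ⁻¹' Set.Ici τ with hAdef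
  set B : Set Ω := (fun ω => (T1 ω, T2 ω)) ⁻¹' D with hBdef
  have hset : {ω | min (T1 ω) τ = min (T2 ω) τ} = A ∪ B := by
    ext ω
    simp only [Set.mem_setOf_eq, Set.mem_union, hAdef, hBdef, hDdef, Set.mem_inter_iff,
      Set.mem_preimage, Set.mem_Ici, Set.mem_setOf_eq]
    constructor
    · intro h
      rcases le_or_gt τ (T1 ω) with h1 | h1
      · rcases le_or_gt τ (T2 ω) with h2 | h2
        · exact Or.inl ⟨h1, h2⟩
        · exfalso
          rw [min_eq_right h1, min_eq_left h2.le] at h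
          exact absurd (h ▸ h2) (lt_irrefl τ)
      · rw [min_eq_left h1.le] at h
        rcases le_or_gt τ (T2 ω) with h2 | h2
        · rw [min_eq_right h2] at h; exact absurd (h ▸ h1) (lt_irrefl τ)
        · rw [min_eq_left h2.le] at h; exact Or.inr ⟨h, h1⟩
    · rintro (⟨h1, h2⟩ | ⟨h1, h2⟩)
      · rw [min_eq_right h1, min_eq_right h2]
      · rw [min_eq_left h2.le, h1, min_eq_left (h1 ▸ h2).le]
  have hdisj : Disjoint A B := by
    rw [Set.disjoint_left]
    rintro ω ⟨h1, _⟩ ⟨_, h2⟩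
    exact absurd (lt_of_le_of_lt h1 h2) (lt_irrefl τ)
  have hBmeas : MeasurableSet B := (hT1.prodMk hT2) hD
  rw [hset, measure_union hdisj hBmeas]
  -- first part by independence
  have hPA : P A = P {ω | τ ≤ T1 ω} * P {ω | τ ≤ T2 ω} := by
    have := hindep.measure_inter_preimage_eq_mul (Set.Ici τ) (Set.Ici τ)
      measurableSet_Ici measurableSet_Ici
    simpa [hAdef, Set.preimage, Set.mem_Ici] using this
  -- second part: joint law is product
  have hmap : P.map (fun ω => (T1 ω, T2 ω)) = μ1.prod μ2 :=
    (ProbabilityTheory.indepFun_iff_map_prod_eq_prod_map_map hT1.aemeasurable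
      hT2.aemeasurable).1 hindep
  have hPB : P B = ∫⁻ x in Set.Iio τ, μ2 {x} ∂μ1 := by
    rw [hBdef, ← Measure.map_apply (hT1.prodMk hT2) hD, hmap,
      Measure.prod_apply hD]
    have hslice : ∀ x : ℝ, μ2 (Prod.mk x ⁻¹' D) =
        (Set.Iio τ).indicator (fun x => μ2 {x}) x := by
      intro x
      by_cases hx : x < τ
      · rw [Set.indicator_of_mem (show x ∈ Set.Iio τ from hx)]
        congr 1
        ext y
        simp [hDdef, hx, eq_comm]
      · rw [Set.indicator_of_notMem (show x ∉ Set.Iio τ from hx)]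
        have : Prod.mk x ⁻¹' D = ∅ := by ext y; simp [hDdef, hx]
        simp [this]
    simp_rw [hslice]
    rw [lintegral_indicator measurableSet_Iio _]
  rw [hPA, hPB]
  congr 1
  -- the atoms of μ2
  set S : Set ℝ := {x : ℝ | 0 < μ2 {x}} with hSdef
  have hS : S.Countable := by
    have := Measure.countable_meas_level_set_pos₀ (μ := μ2) (g := id)
      measurable_id.nullMeasurable
    simpa [Set.setOf_eq_eq_singleton'] using this
  have hzero : ∀ x : ℝ, x ∉ S → μ2 {x} = 0 := by
    intro x hx
    by_contra h
    exact hx (pos_iff_ne_zero.2 h)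
  have hind : ∀ x : ℝ, μ2 {x} = S.indicator (fun x => μ2 {x}) x := by
    intro x
    by_cases hx : x ∈ S
    · rw [Set.indicator_of_mem hx]
    · rw [Set.indicator_of_notMem hx, hzero x hx]
  have hμ1sing : ∀ t : ℝ, P {ω | T1 ω = t} = μ1 {t} := by
    intro t
    rw [hμ1, Measure.map_apply hT1 (measurableSet_singleton t)]
    rfl
  have hμ2sing : ∀ t : ℝ, P {ω | T2 ω = t} = μ2 {t} := by
    intro t
    rw [hμ2, Measure.map_apply hT2 (measurableSet_singleton t)]
    rfl
  have step1 : ∫⁻ x in Set.Iio τ, μ2 {x} ∂μ1 = ∫⁻ x in S ∩ Set.Iio τ, μ2 {x} ∂μ1 := by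
    rw [lintegral_congr hind, lintegral_indicator hS.measurableSet,
      Measure.restrict_restrict hS.measurableSet]
  have step2 : ∫⁻ x in S ∩ Set.Iio τ, μ2 {x} ∂μ1
      = ∑' a : ↥(S ∩ Set.Iio τ), μ2 {(a : ℝ)} * μ1 {(a : ℝ)} :=
    lintegral_countable _ (hS.mono Set.inter_subset_left)
  have h1 : ∑' a : ↥(S ∩ Set.Iio τ), μ2 {(a : ℝ)} * μ1 {(a : ℝ)}
      = ∑' t : ℝ, (S ∩ Set.Iio τ).indicator (fun t => μ2 {t} * μ1 {t}) t :=
    tsum_subtype (S ∩ Set.Iio τ) (fun t => μ2 {t} * μ1 {t})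
  have h2 : ∑' t : {t : ℝ // t < τ}, P {ω | T1 ω = (t : ℝ)} * P {ω | T2 ω = (t : ℝ)}
      = ∑' t : ℝ, (Set.Iio τ).indicator (fun t => μ1 {t} * μ2 {t}) t := by
    have := tsum_subtype (Set.Iio τ) (fun t => μ1 {t} * μ2 {t})
    simp_rw [hμ1sing, hμ2sing]
    exact this
  rw [step1, step2, h1, h2]
  apply tsum_congr
  intro t
  by_cases ht : t ∈ Set.Iio τ
  · by_cases hts : t ∈ S
    · rw [Set.indicator_of_mem (Set.mem_inter hts ht), Set.indicator_of_mem ht, mul_comm]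
    · rw [Set.indicator_of_notMem (fun h => hts h.1), Set.indicator_of_mem ht,
        hzero t hts, mul_zero]
  · rw [Set.indicator_of_notMem (fun h => ht h.2), Set.indicator_of_notMem ht]
end

section
/- Let p₁, p₂ ≥ 1. On a probability space let (Z_{1,i})_{i≥1} (values in ℝ^{p₁}) and (Z_{2,j})_{j≥1} (values in ℝ^{p₂}) be two mutually independent sequences, each consisting of i.i.d. random vectors, with E‖Z_{1,1}‖² < ∞ and E‖Z_{2,1}‖² < ∞. Write W_{ij} = (1, Z_{1,i}ᵀ, Z_{2,j}ᵀ)ᵀ ∈ ℝᵖ with p = 1+p₁+p₂, and for n₁, n₂ ≥ 1 let Σ̂_{n₁,n₂} = (n₁n₂)⁻¹ Σ_{i=1}^{n₁} Σ_{j=1}^{n₂} W_{ij}W_{ij}ᵀ. Then, almost surely, Σ̂_{n₁,n₂} converges (entrywise) to Σ = E[W₁₁W₁₁ᵀ] as min(n₁,n₂) → ∞ (i.e., convergence holds along the product of the atTop filters in (n₁,n₂)); explicitly, Σ = [[1, E₁ᵀ, E₂ᵀ], [E₁, Σ₁ + E₁E₁ᵀ, E₁E₂ᵀ], [E₂, E₂E₁ᵀ,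 Σ₂ + E₂E₂ᵀ]] with E_j = E(Z_{j,1}) and Σ_j = var(Z_{j,1}). -/
open MeasureTheory ProbabilityTheory Filter Matrix Topology

/-- Index type for the stacked vector `(1, Z₁ᵀ, Z₂ᵀ)ᵀ ∈ ℝ^{1+p₁+p₂}`. -/
abbrev CovIdx (p₁ p₂ : ℕ) : Type := Unit ⊕ (Fin p₁ ⊕ Fin p₂)

private lemma avg_const_tendsto :
    Tendsto (fun n : ℕ => (n : ℝ)⁻¹ * ∑ _i ∈ Finset.range n, (1 : ℝ)) atTop (𝓝 1) := by
  have h : ∀ᶠ n : ℕ in atTop,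
      (1 : ℝ) = (n : ℝ)⁻¹ * ∑ _i ∈ Finset.range n, (1 : ℝ) := by
    filter_upwards [eventually_ge_atTop 1] with n hn
    have hn' : (n : ℝ) ≠ 0 := by
      exact Nat.cast_ne_zero.mpr (by omega)
    simp [Finset.sum_const, inv_mul_cancel₀ hn']
  exact tendsto_const_nhds.congr' h

private lemma key_det (F G : ℕ → ℝ) (α β : ℝ)
    (hF : Tendsto (fun n : ℕ => (n : ℝ)⁻¹ * ∑ i ∈ Finset.range n, F i) atTop (𝓝 α))
    (hG : Tendsto (fun n : ℕ => (n : ℝ)⁻¹ * ∑ j ∈ Finset.range n, G j) atTop (𝓝 β)) :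
    Tendsto (fun n : ℕ × ℕ => ((n.1 : ℝ) * (n.2 : ℝ))⁻¹ *
        ∑ i ∈ Finset.range n.1, ∑ j ∈ Finset.range n.2, F i * G j)
      (atTop ×ˢ atTop) (𝓝 (α * β)) := by
  have h := (hF.comp tendsto_fst).mul (hG.comp tendsto_snd)
  refine h.congr fun n => ?_
  simp only [Function.comp_apply, ← Finset.sum_mul_sum, mul_inv]
  ring

/-- Strong law of large numbers for the empirical second-moment matrix `Σ̂` of the stacked
covariate vectors: almost surely `Σ̂_{n₁,n₂} → Σ = E[W₁₁W₁₁ᵀ]` entrywise as `min(n₁,n₂) → ∞`,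
and `Σ` has the explicit block form determined by `E₁, E₂, Σ₁, Σ₂`. -/
theorem empirical_second_moment_matrix_slln
    {Ω : Type*} [MeasurableSpace Ω] (P : Measure Ω) [IsProbabilityMeasure P]
    (p₁ p₂ : ℕ) (hp₁ : 1 ≤ p₁) (hp₂ : 1 ≤ p₂)
    -- the two mutually independent i.i.d. covariate sequences
    (Z1 : ℕ → Ω → Fin p₁ → ℝ) (Z2 : ℕ → Ω → Fin p₂ → ℝ)
    (hZ1meas : ∀ i, Measurable (Z1 i)) (hZ2meas : ∀ j, Measurable (Z2 j))
    (hZ1indep : iIndepFun Z1 P)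
    (hZ2indep : iIndepFun Z2 P)
    (hindep : IndepFun (fun ω i => Z1 i ω) (fun ω j => Z2 j ω) P)
    (hZ1ident : ∀ i, IdentDistrib (Z1 i) (Z1 0) P P)
    (hZ2ident : ∀ j, IdentDistrib (Z2 j) (Z2 0) P P)
    -- square-integrable covariates
    (hZ1mom : MemLp (Z1 0) 2 P) (hZ2mom : MemLp (Z2 0) 2 P)
    -- stacked covariate vectors W_{ij} = (1, Z_{1,i}ᵀ, Z_{2,j}ᵀ)ᵀ
    (W : ℕ → ℕ → Ω → CovIdx p₁ p₂ → ℝ)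
    (hW : ∀ i j ω, W i j ω = Sum.elim (fun _ => (1 : ℝ)) (Sum.elim (Z1 i ω) (Z2 j ω)))
    -- the empirical second-moment matrices
    (Sighat : ℕ → ℕ → Ω → Matrix (CovIdx p₁ p₂) (CovIdx p₁ p₂) ℝ)
    (hSighat : ∀ n₁ n₂ ω k l, Sighat n₁ n₂ ω k l =
      ((n₁ : ℝ) * (n₂ : ℝ))⁻¹ *
        ∑ i ∈ Finset.range n₁, ∑ j ∈ Finset.range n₂, W i j ω k * W i j ω l)
    -- the population second-moment matrix Σ = E[W₁₁ W₁₁ᵀ]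
    (Sig : Matrix (CovIdx p₁ p₂) (CovIdx p₁ p₂) ℝ)
    (hSig : ∀ k l, Sig k l = ∫ ω, W 0 0 ω k * W 0 0 ω l ∂P)
    -- means and covariance matrices of the covariates
    (E1 : Fin p₁ → ℝ) (hE1 : ∀ a, E1 a = ∫ ω, Z1 0 ω a ∂P)
    (E2 : Fin p₂ → ℝ) (hE2 : ∀ b, E2 b = ∫ ω, Z2 0 ω b ∂P)
    (S1 : Matrix (Fin p₁) (Fin p₁) ℝ)
    (hS1 : ∀ a a', S1 a a' = ∫ ω, (Z1 0 ω a - E1 a) * (Z1 0 ω a' - E1 a') ∂P)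
    (S2 : Matrix (Fin p₂) (Fin p₂) ℝ)
    (hS2 : ∀ b b', S2 b b' = ∫ ω, (Z2 0 ω b - E2 b) * (Z2 0 ω b' - E2 b') ∂P) :
    -- (1) almost sure entrywise convergence as min(n₁,n₂) → ∞
    (∀ᵐ ω ∂P, ∀ k l, Tendsto (fun n : ℕ × ℕ => Sighat n.1 n.2 ω k l)
        (atTop ×ˢ atTop) (𝓝 (Sig k l))) ∧
    -- (2) explicit block form of Σ
      Sig = fromBlocks
        (Matrix.of fun _ _ => (1 : ℝ))
        (Matrix.of fun _ s => Sum.elim E1 E2 s)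
        (Matrix.of fun s _ => Sum.elim E1 E2 s)
        (fromBlocks (S1 + vecMulVec E1 E1) (vecMulVec E1 E2)
          (vecMulVec E2 E1) (S2 + vecMulVec E2 E2)) := by
  -- coordinate measurability
  have hmc1 : ∀ i (a : Fin p₁), Measurable fun ω => Z1 i ω a :=
    fun i a => (measurable_pi_apply a).comp (hZ1meas i)
  have hmc2 : ∀ j (b : Fin p₂), Measurable fun ω => Z2 j ω b :=
    fun j b => (measurable_pi_apply b).comp (hZ2meas j)
  -- coordinate Memℒp 2
  have hc1 : ∀ a : Fin p₁, MemLp (fun ω => Z1 0 ω a) 2 P := fun a =>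
    hZ1mom.mono (hmc1 0 a).aestronglyMeasurable
      (Filter.Eventually.of_forall fun ω => norm_le_pi_norm (Z1 0 ω) a)
  have hc2 : ∀ b : Fin p₂, MemLp (fun ω => Z2 0 ω b) 2 P := fun b =>
    hZ2mom.mono (hmc2 0 b).aestronglyMeasurable
      (Filter.Eventually.of_forall fun ω => norm_le_pi_norm (Z2 0 ω) b)
  have htwo : (1 : ENNReal) / 1 = 1 / 2 + 1 / 2 := by
    rw [ENNReal.div_add_div_same, div_one, one_add_one_eq_two,
      ENNReal.div_self (by norm_num) ENNReal.ofNat_ne_top]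
  -- coordinate integrability
  have hi1 : ∀ a : Fin p₁, Integrable (fun ω => Z1 0 ω a) P :=
    fun a => (hc1 a).integrable one_le_two
  have hi2 : ∀ b : Fin p₂, Integrable (fun ω => Z2 0 ω b) P :=
    fun b => (hc2 b).integrable one_le_two
  -- integrability of products of coordinates
  have hm1 : ∀ a a' : Fin p₁, Integrable (fun ω => Z1 0 ω a * Z1 0 ω a') P := fun a a' =>
    ((hc1 a').smul (r := 1) (hc1 a)).integrable le_rfl
  have hm2 : ∀ b b' : Fin p₂, Integrable (fun ω => Z2 0 ω b * Z2 0 ω b') P := fun b b' =>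
    ((hc2 b').smul (r := 1) (hc2 b)).integrable le_rfl
  have hm12 : ∀ (a : Fin p₁) (b : Fin p₂), Integrable (fun ω => Z1 0 ω a * Z2 0 ω b) P :=
    fun a b => ((hc2 b).smul (r := 1) (hc1 a)).integrable le_rfl
  -- cross independence of coordinates
  have hIc : ∀ (a : Fin p₁) (b : Fin p₂),
      IndepFun (fun ω => Z1 0 ω a) (fun ω => Z2 0 ω b) P := fun a b =>
    hindep.comp
      (show Measurable fun f : ℕ → Fin p₁ → ℝ => f 0 a from
        (measurable_pi_apply a).comp (measurable_pi_apply 0))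
      (show Measurable fun f : ℕ → Fin p₂ → ℝ => f 0 b from
        (measurable_pi_apply b).comp (measurable_pi_apply 0))
  -- cross moment factorization
  have hcross : ∀ (a : Fin p₁) (b : Fin p₂),
      (∫ ω, Z1 0 ω a * Z2 0 ω b ∂P) = E1 a * E2 b := by
    intro a b
    rw [hE1, hE2]
    exact (hIc a b).integral_fun_mul_eq_mul_integral (hmc1 0 a).aestronglyMeasurable
      (hmc2 0 b).aestronglyMeasurable
  have hcross' : ∀ (a : Fin p₁) (b : Fin p₂),
      (∫ ω, Z2 0 ω b * Z1 0 ω a ∂P) = E1 a * E2 b := by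
    intro a b
    rw [← hcross a b]
    exact integral_congr_ae (Filter.Eventually.of_forall fun ω => mul_comm _ _)
  -- second moments in terms of Σⱼ and Eⱼ
  have hvar1 : ∀ a a' : Fin p₁,
      (∫ ω, Z1 0 ω a * Z1 0 ω a' ∂P) = S1 a a' + E1 a * E1 a' := by
    intro a a'
    have hrw : (fun ω => (Z1 0 ω a - E1 a) * (Z1 0 ω a' - E1 a')) =
        fun ω => Z1 0 ω a * Z1 0 ω a' - E1 a * Z1 0 ω a' - E1 a' * Z1 0 ω a
          + E1 a * E1 a' := funext fun ω => by ring
    have h1 : Integrable (fun ω => Z1 0 ω a * Z1 0 ω a' - E1 a * Z1 0 ω a') P :=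
      (hm1 a a').sub ((hi1 a').const_mul _)
    have h2 : Integrable
        (fun ω => Z1 0 ω a * Z1 0 ω a' - E1 a * Z1 0 ω a' - E1 a' * Z1 0 ω a) P :=
      h1.sub ((hi1 a).const_mul _)
    have hS : S1 a a' = (∫ ω, Z1 0 ω a * Z1 0 ω a' ∂P) - E1 a * E1 a' := by
      rw [hS1, hrw, integral_add h2 (integrable_const _),
        integral_sub h1 ((hi1 a).const_mul _),
        integral_sub (hm1 a a') ((hi1 a').const_mul _),
        integral_const_mul, integral_const_mul, integral_const]
      simp only [measure_univ, probReal_univ, ENNReal.toReal_one, one_smul, ← hE1]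
      ring
    rw [hS]; ring
  have hvar2 : ∀ b b' : Fin p₂,
      (∫ ω, Z2 0 ω b * Z2 0 ω b' ∂P) = S2 b b' + E2 b * E2 b' := by
    intro b b'
    have hrw : (fun ω => (Z2 0 ω b - E2 b) * (Z2 0 ω b' - E2 b')) =
        fun ω => Z2 0 ω b * Z2 0 ω b' - E2 b * Z2 0 ω b' - E2 b' * Z2 0 ω b
          + E2 b * E2 b' := funext fun ω => by ring
    have h1 : Integrable (fun ω => Z2 0 ω b * Z2 0 ω b' - E2 b * Z2 0 ω b') P :=
      (hm2 b b').sub ((hi2 b').const_mul _)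
    have h2 : Integrable
        (fun ω => Z2 0 ω b * Z2 0 ω b' - E2 b * Z2 0 ω b' - E2 b' * Z2 0 ω b) P :=
      h1.sub ((hi2 b).const_mul _)
    have hS : S2 b b' = (∫ ω, Z2 0 ω b * Z2 0 ω b' ∂P) - E2 b * E2 b' := by
      rw [hS2, hrw, integral_add h2 (integrable_const _),
        integral_sub h1 ((hi2 b).const_mul _),
        integral_sub (hm2 b b') ((hi2 b').const_mul _),
        integral_const_mul, integral_const_mul, integral_const]
      simp only [measure_univ, probReal_univ, ENNReal.toReal_one, one_smul, ← hE2]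
      ring
    rw [hS]; ring
  -- strong laws for coordinates
  have hA1 : ∀ a : Fin p₁, ∀ᵐ ω ∂P, Tendsto
      (fun n : ℕ => (n : ℝ)⁻¹ * ∑ i ∈ Finset.range n, Z1 i ω a) atTop (𝓝 (E1 a)) := by
    intro a
    have h := strong_law_ae_real (fun i ω => Z1 i ω a) (hi1 a)
      (fun i j hij => (hZ1indep.indepFun hij).comp
        (measurable_pi_apply a) (measurable_pi_apply a))
      (fun i => (hZ1ident i).comp (measurable_pi_apply a))
    rw [hE1]
    filter_upwards [h] with ω hω
    simpa [div_eq_inv_mul] using hω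
  have hA2 : ∀ b : Fin p₂, ∀ᵐ ω ∂P, Tendsto
      (fun n : ℕ => (n : ℝ)⁻¹ * ∑ j ∈ Finset.range n, Z2 j ω b) atTop (𝓝 (E2 b)) := by
    intro b
    have h := strong_law_ae_real (fun j ω => Z2 j ω b) (hi2 b)
      (fun i j hij => (hZ2indep.indepFun hij).comp
        (measurable_pi_apply b) (measurable_pi_apply b))
      (fun j => (hZ2ident j).comp (measurable_pi_apply b))
    rw [hE2]
    filter_upwards [h] with ω hω
    simpa [div_eq_inv_mul] using hω
  -- strong laws for products of coordinates
  have hB1 : ∀ a a' : Fin p₁, ∀ᵐ ω ∂P, Tendsto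
      (fun n : ℕ => (n : ℝ)⁻¹ * ∑ i ∈ Finset.range n, Z1 i ω a * Z1 i ω a')
      atTop (𝓝 (∫ ω, Z1 0 ω a * Z1 0 ω a' ∂P)) := by
    intro a a'
    have hφ : Measurable fun v : Fin p₁ → ℝ => v a * v a' :=
      (measurable_pi_apply a).mul (measurable_pi_apply a')
    have h := strong_law_ae_real (fun i ω => Z1 i ω a * Z1 i ω a') (hm1 a a')
      (fun i j hij => (hZ1indep.indepFun hij).comp hφ hφ)
      (fun i => (hZ1ident i).comp hφ)
    filter_upwards [h] with ω hω
    simpa [div_eq_inv_mul] using hω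
  have hB2 : ∀ b b' : Fin p₂, ∀ᵐ ω ∂P, Tendsto
      (fun n : ℕ => (n : ℝ)⁻¹ * ∑ j ∈ Finset.range n, Z2 j ω b * Z2 j ω b')
      atTop (𝓝 (∫ ω, Z2 0 ω b * Z2 0 ω b' ∂P)) := by
    intro b b'
    have hφ : Measurable fun v : Fin p₂ → ℝ => v b * v b' :=
      (measurable_pi_apply b).mul (measurable_pi_apply b')
    have h := strong_law_ae_real (fun j ω => Z2 j ω b * Z2 j ω b') (hm2 b b')
      (fun i j hij => (hZ2indep.indepFun hij).comp hφ hφ)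
      (fun j => (hZ2ident j).comp hφ)
    filter_upwards [h] with ω hω
    simpa [div_eq_inv_mul] using hω
  constructor
  · -- part (1)
    have hA1' : ∀ᵐ ω ∂P, ∀ a, Tendsto
        (fun n : ℕ => (n : ℝ)⁻¹ * ∑ i ∈ Finset.range n, Z1 i ω a) atTop (𝓝 (E1 a)) :=
      ae_all_iff.2 hA1
    have hA2' : ∀ᵐ ω ∂P, ∀ b, Tendsto
        (fun n : ℕ => (n : ℝ)⁻¹ * ∑ j ∈ Finset.range n, Z2 j ω b) atTop (𝓝 (E2 b)) :=
      ae_all_iff.2 hA2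
    have hB1' : ∀ᵐ ω ∂P, ∀ a a', Tendsto
        (fun n : ℕ => (n : ℝ)⁻¹ * ∑ i ∈ Finset.range n, Z1 i ω a * Z1 i ω a')
        atTop (𝓝 (∫ ω, Z1 0 ω a * Z1 0 ω a' ∂P)) :=
      ae_all_iff.2 fun a => ae_all_iff.2 fun a' => hB1 a a'
    have hB2' : ∀ᵐ ω ∂P, ∀ b b', Tendsto
        (fun n : ℕ => (n : ℝ)⁻¹ * ∑ j ∈ Finset.range n, Z2 j ω b * Z2 j ω b')
        atTop (𝓝 (∫ ω, Z2 0 ω b * Z2 0 ω b' ∂P)) :=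
      ae_all_iff.2 fun b => ae_all_iff.2 fun b' => hB2 b b'
    filter_upwards [hA1', hA2', hB1', hB2'] with ω h1 h2 h3 h4
    intro k l
    have hfun : ∀ F G : ℕ → ℝ, (∀ i j, W i j ω k * W i j ω l = F i * G j) →
        (fun n : ℕ × ℕ => Sighat n.1 n.2 ω k l) =
          fun n : ℕ × ℕ => ((n.1 : ℝ) * (n.2 : ℝ))⁻¹ *
            ∑ i ∈ Finset.range n.1, ∑ j ∈ Finset.range n.2, F i * G j := by
      intro F G h
      funext n
      rw [hSighat]
      congr 1
      exact Finset.sum_congr rfl fun i _ => Finset.sum_congr rfl fun j _ => h i j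
    rcases k with k | a | b <;> rcases l with l | a' | b'
    · -- (1,1)
      have hSv : Sig (Sum.inl k) (Sum.inl l) = 1 * 1 := by
        rw [hSig]; simp [hW]
      rw [hfun (fun _ => 1) (fun _ => 1) (fun i j => by simp [hW]), hSv]
      exact key_det _ _ _ _ avg_const_tendsto avg_const_tendsto
    · -- (1, Z1)
      have hSv : Sig (Sum.inl k) (Sum.inr (Sum.inl a')) = E1 a' * 1 := by
        rw [hSig]; simp [hW, hE1 a']
      rw [hfun (fun i => Z1 i ω a') (fun _ => 1) (fun i j => by simp [hW]), hSv]
      exact key_det _ _ _ _ (h1 a') avg_const_tendsto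
    · -- (1, Z2)
      have hSv : Sig (Sum.inl k) (Sum.inr (Sum.inr b')) = 1 * E2 b' := by
        rw [hSig]; simp [hW, hE2 b']
      rw [hfun (fun _ => 1) (fun j => Z2 j ω b') (fun i j => by simp [hW]), hSv]
      exact key_det _ _ _ _ avg_const_tendsto (h2 b')
    · -- (Z1, 1)
      have hSv : Sig (Sum.inr (Sum.inl a)) (Sum.inl l) = E1 a * 1 := by
        rw [hSig]; simp [hW, hE1 a]
      rw [hfun (fun i => Z1 i ω a) (fun _ => 1) (fun i j => by simp [hW]), hSv]
      exact key_det _ _ _ _ (h1 a) avg_const_tendsto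
    · -- (Z1, Z1)
      have hSv : Sig (Sum.inr (Sum.inl a)) (Sum.inr (Sum.inl a')) =
          (∫ ω, Z1 0 ω a * Z1 0 ω a' ∂P) * 1 := by
        rw [hSig]; simp [hW]
      rw [hfun (fun i => Z1 i ω a * Z1 i ω a') (fun _ => 1)
        (fun i j => by simp [hW]), hSv]
      exact key_det _ _ _ _ (h3 a a') avg_const_tendsto
    · -- (Z1, Z2)
      have hSv : Sig (Sum.inr (Sum.inl a)) (Sum.inr (Sum.inr b')) = E1 a * E2 b' := by
        rw [hSig]
        simp only [hW, Sum.elim_inr, Sum.elim_inl]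
        exact hcross a b'
      rw [hfun (fun i => Z1 i ω a) (fun j => Z2 j ω b') (fun i j => by simp [hW]), hSv]
      exact key_det _ _ _ _ (h1 a) (h2 b')
    · -- (Z2, 1)
      have hSv : Sig (Sum.inr (Sum.inr b)) (Sum.inl l) = 1 * E2 b := by
        rw [hSig]; simp [hW, hE2 b]
      rw [hfun (fun _ => 1) (fun j => Z2 j ω b) (fun i j => by simp [hW]), hSv]
      exact key_det _ _ _ _ avg_const_tendsto (h2 b)
    · -- (Z2, Z1)
      have hSv : Sig (Sum.inr (Sum.inr b)) (Sum.inr (Sum.inl a')) = E1 a' * E2 b := by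
        rw [hSig]
        simp only [hW, Sum.elim_inr, Sum.elim_inl]
        exact hcross' a' b
      rw [hfun (fun i => Z1 i ω a') (fun j => Z2 j ω b)
        (fun i j => by simp [hW, mul_comm]), hSv]
      exact key_det _ _ _ _ (h1 a') (h2 b)
    · -- (Z2, Z2)
      have hSv : Sig (Sum.inr (Sum.inr b)) (Sum.inr (Sum.inr b')) =
          1 * (∫ ω, Z2 0 ω b * Z2 0 ω b' ∂P) := by
        rw [hSig]; simp [hW]
      rw [hfun (fun _ => 1) (fun j => Z2 j ω b * Z2 j ω b')
        (fun i j => by simp [hW]), hSv]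
      exact key_det _ _ _ _ avg_const_tendsto (h4 b b')
  · -- part (2): block form
    ext k l
    rcases k with k | a | b <;> rcases l with l | a' | b' <;>
      rw [hSig] <;>
      simp only [hW, Sum.elim_inl, Sum.elim_inr, one_mul, mul_one,
        fromBlocks_apply₁₁, fromBlocks_apply₁₂, fromBlocks_apply₂₁, fromBlocks_apply₂₂,
        Matrix.of_apply, Matrix.add_apply, vecMulVec_apply]
    · simp
    · rw [← hE1]
    · rw [← hE2]
    · rw [← hE1]
    · rw [hvar1 a a']
    · exact hcross a b'
    · rw [← hE2]
    · exact (hcross' a' b).trans (mul_comm _ _)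
    · rw [hvar2 b b']
end
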